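/- arXiv:1311.1398 — 2 statements merged into one kernel-verified Lean document; each statement's English description precedes it below -/
import Mathlib

section
/- For every integer k ≥ 2, there exists a natural number n ≥ 1 such that n/π(n) = k (in particular, π(n) divides n), where π(n) denotes the number of primes not exceeding n. -/
open Finset

-- L1: partial sums of 1/p over primes get arbitrarily large
lemma sum_primes_unbounded (c : ℝ) : ∃ n : ℕ, c ≤ ∑ p ∈ n.primesBelow, (1 / p : ℝ) := by
  have h := not_summable_one_div_on_primes
  rw [not_summable_iff_tendsto_nat_atTop_of_nonneg
    (fun i => Set.indicator_nonneg (fun p _ => by positivity) i)] at h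
  obtain ⟨n, hn⟩ := (Filter.tendsto_atTop.mp h c).exists
  refine ⟨n, hn.trans_eq ?_⟩
  rw [Nat.primesBelow, Finset.sum_filter]
  refine Finset.sum_congr rfl fun i _ => ?_
  by_cases hi : i.Prime <;> simp [Set.indicator, hi]
open Finset

lemma one_add_sum_le_prod (s : Finset ℕ) (f : ℕ → ℝ) (hf : ∀ i ∈ s, 0 ≤ f i) :
    1 + ∑ i ∈ s, f i ≤ ∏ i ∈ s, (1 + f i) := by
  induction s using Finset.induction with
  | empty => simp
  | @insert a s' hx ih =>
    rw [Finset.sum_insert hx, Finset.prod_insert hx]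
    have h1 : 0 ≤ f a := hf a (mem_insert_self a s')
    have h2 : ∀ i ∈ s', 0 ≤ f i := fun i hi => hf i (mem_insert_of_mem hi)
    have h3 := ih h2
    have h4 : (0:ℝ) ≤ ∑ i ∈ s', f i := Finset.sum_nonneg h2
    nlinarith [Finset.prod_nonneg (fun i hi => by linarith [h2 i hi] : ∀ i ∈ s', (0:ℝ) ≤ 1 + f i)]

lemma totient_prod_primes (s : Finset ℕ) (hs : ∀ p ∈ s, p.Prime) :
    (∏ p ∈ s, p).totient = ∏ p ∈ s, (p - 1) := by
  induction s using Finset.induction with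
  | empty => simp
  | @insert a s' hx ih =>
    rw [Finset.prod_insert hx, Finset.prod_insert hx,
      Nat.totient_mul, Nat.totient_prime (hs a (mem_insert_self a s')),
      ih (fun p hp => hs p (mem_insert_of_mem hp))]
    exact Nat.Coprime.prod_right fun p hp =>
      (Nat.coprime_primes (hs a (mem_insert_self a s'))
        (hs p (mem_insert_of_mem hp))).mpr (fun h => hx (h ▸ hp))

lemma exists_totient_small (k : ℕ) : ∃ a : ℕ, 0 < a ∧ k * a.totient < a := by
  obtain ⟨n, hn⟩ := sum_primes_unbounded (k : ℝ)
  set s := n.primesBelow with hs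
  have hsp : ∀ p ∈ s, p.Prime := fun p hp => Nat.prime_of_mem_primesBelow hp
  refine ⟨∏ p ∈ s, p, Finset.prod_pos (fun p hp => (hsp p hp).pos), ?_⟩
  rw [totient_prod_primes s hsp]
  -- move to ℝ
  have key : ((k:ℝ) + 1) * ∏ p ∈ s, ((p:ℝ) - 1) ≤ ∏ p ∈ s, (p:ℝ) := by
    have h1 : ∀ p ∈ s, (0:ℝ) ≤ 1 / ((p:ℝ) - 1) := by
      intro p hp
      have : (2:ℝ) ≤ p := by exact_mod_cast (hsp p hp).two_le
      have : (0:ℝ) < (p:ℝ) - 1 := by linarith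
      positivity
    have h2 : (k:ℝ) + 1 ≤ ∏ p ∈ s, (1 + 1 / ((p:ℝ) - 1)) := by
      refine le_trans ?_ (one_add_sum_le_prod s _ h1)
      have : ∑ p ∈ s, (1:ℝ)/p ≤ ∑ p ∈ s, 1 / ((p:ℝ) - 1) := by
        refine Finset.sum_le_sum fun p hp => ?_
        have h2p : (2:ℝ) ≤ p := by exact_mod_cast (hsp p hp).two_le
        rw [div_le_div_iff₀ (by linarith) (by linarith)]
        linarith
      linarith [hn]
    have h3 : ∀ p ∈ s, (0:ℝ) < (p:ℝ) - 1 := by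
      intro p hp
      have : (2:ℝ) ≤ p := by exact_mod_cast (hsp p hp).two_le
      linarith
    calc ((k:ℝ) + 1) * ∏ p ∈ s, ((p:ℝ) - 1)
        ≤ (∏ p ∈ s, (1 + 1 / ((p:ℝ) - 1))) * ∏ p ∈ s, ((p:ℝ) - 1) := by
          refine mul_le_mul_of_nonneg_right h2 (Finset.prod_nonneg fun p hp => (h3 p hp).le)
      _ = ∏ p ∈ s, ((1 + 1 / ((p:ℝ) - 1)) * ((p:ℝ) - 1)) := (Finset.prod_mul_distrib).symm
      _ = ∏ p ∈ s, (p:ℝ) := by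
          refine Finset.prod_congr rfl fun p hp => ?_
          have h2p : (2:ℝ) ≤ p := by exact_mod_cast (hsp p hp).two_le
          have : (p:ℝ) - 1 ≠ 0 := by linarith
          field_simp
          ring
  have hprodpos : (0:ℝ) < ∏ p ∈ s, ((p:ℝ) - 1) := by
    refine Finset.prod_pos fun p hp => ?_
    have : (2:ℝ) ≤ p := by exact_mod_cast (hsp p hp).two_le
    linarith
  have : (k:ℝ) * ∏ p ∈ s, ((p:ℝ) - 1) < ∏ p ∈ s, (p:ℝ) := by nlinarith
  have hcast : ∀ p ∈ s, ((p - 1 : ℕ) : ℝ) = (p:ℝ) - 1 := fun p hp => by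
    have := (hsp p hp).two_le; push_cast [Nat.cast_sub (by omega : 1 ≤ p)]; ring
  have : ((k * ∏ p ∈ s, (p-1) : ℕ) : ℝ) < ((∏ p ∈ s, p : ℕ) : ℝ) := by
    push_cast
    rwa [Finset.prod_congr rfl hcast]
  exact_mod_cast this

lemma exists_le (k : ℕ) (hk : 2 ≤ k) : ∃ N : ℕ, 2 ≤ N ∧ k * N.primeCounting ≤ N := by
  obtain ⟨a, ha0, ha⟩ := exists_totient_small k
  have hφ : 1 ≤ a.totient := Nat.totient_pos.mpr ha0
  have ha2 : 2 ≤ a := by nlinarith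
  set M := k * Nat.primeCounting' (a + 1) with hM
  set N := a * M + a with hN
  have hπ : Nat.primeCounting N = Nat.primeCounting' ((a+1) + a * M) := by
    rw [Nat.primeCounting]
    congr 1
    omega
  have hb := Nat.primeCounting'_add_le ha0.ne' (Nat.lt_succ_self a) (a * M)
  rw [Nat.mul_div_cancel_left M ha0] at hb
  refine ⟨N, by omega, ?_⟩
  rw [hπ]
  have h1 : k * Nat.primeCounting' ((a+1) + a*M) ≤ M + k * (a.totient * (M + 1)) := by
    calc k * Nat.primeCounting' ((a+1) + a*M)
        ≤ k * (Nat.primeCounting' (a+1) + a.totient * (M + 1)) :=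
          Nat.mul_le_mul_left k hb
      _ = M + k * (a.totient * (M+1)) := by rw [Nat.mul_add, hM]
  have h2 : (k * a.totient + 1) * (M + 1) ≤ a * (M + 1) :=
    Nat.mul_le_mul_right _ (by omega)
  have h2' : k * (a.totient * (M + 1)) + (M + 1) ≤ a * M + a := by
    rw [show k * (a.totient * (M+1)) + (M+1) = (k * a.totient + 1) * (M+1) by ring,
      show a * M + a = a * (M+1) by ring]
    exact h2
  rw [hN]
  linarith [h1, h2']

theorem stmt_0 :
    ∀ k : ℕ, 2 ≤ k → ∃ n : ℕ, 1 ≤ n ∧ n.primeCounting ∣ n ∧ n / n.primeCounting = k := by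
  intro k hk
  obtain ⟨N, hN2, hNle⟩ := exists_le k hk
  have hex : ∃ m : ℕ, k * (m + 2).primeCounting ≤ m + 2 :=
    ⟨N - 2, by rw [show N - 2 + 2 = N by omega]; exact hNle⟩
  have hfind : k * (Nat.find hex + 2).primeCounting ≤ Nat.find hex + 2 :=
    Nat.find_spec hex
  have heq : k * (Nat.find hex + 2).primeCounting = Nat.find hex + 2 := by
    rcases Nat.eq_zero_or_pos (Nat.find hex) with h0 | h0
    · have hπ2 : Nat.primeCounting 2 = 1 := by decide
      rw [h0, show (0:ℕ) + 2 = 2 from rfl, hπ2] at hfind ⊢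
      omega
    · have hprev := Nat.find_min hex (show Nat.find hex - 1 < Nat.find hex by omega)
      rw [show Nat.find hex - 1 + 2 = Nat.find hex + 1 by omega] at hprev
      have hmono : (Nat.find hex + 1).primeCounting ≤ (Nat.find hex + 2).primeCounting :=
        Nat.monotone_primeCounting (by omega)
      have h3 : Nat.find hex + 2 ≤ k * (Nat.find hex + 1).primeCounting := by omega
      have h4 : k * (Nat.find hex + 1).primeCounting ≤ k * (Nat.find hex + 2).primeCounting :=
        Nat.mul_le_mul_left k hmono
      omega
  have hπpos : 0 < (Nat.find hex + 2).primeCounting := by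
    by_contra h
    rw [Nat.eq_zero_of_not_pos h] at heq
    omega
  exact ⟨Nat.find hex + 2, by omega, ⟨k, heq.symm.trans (mul_comm _ _)⟩,
    Nat.div_eq_of_eq_mul_left hπpos heq.symm⟩
end

section
/- There are infinitely many natural numbers n such that π(n) divides n, where π(n) denotes the number of primes not exceeding n. -/
open Finset Nat

/-- For every `k` there is a positive `a` with `2 * k * φ a ≤ a`. -/
lemma aux_small_totient (k : ℕ) : ∃ a : ℕ, 0 < a ∧ 2 * k * a.totient ≤ a := by
  set f : ℕ → ℝ := Set.indicator {p | p.Prime} (fun n => 1 / n) with hfdef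
  have hf : ∀ n, 0 ≤ f n := fun n => Set.indicator_nonneg (fun p _ => by positivity) _
  have htend := (not_summable_iff_tendsto_nat_atTop_of_nonneg hf).mp
    not_summable_one_div_on_primes
  obtain ⟨n, hn⟩ := (htend.eventually_ge_atTop (Real.log (2 * k + 1))).exists
  refine ⟨primorial n, primorial_pos n, ?_⟩
  set a := primorial n with ha
  set F := (Finset.range (n + 1)).filter Nat.Prime with hF
  have hPF : a.primeFactors = F :=
    Nat.primeFactors_prod (fun p hp => (Finset.mem_filter.mp hp).2)
  have hsum : ∑ p ∈ F, (p : ℝ)⁻¹ = ∑ i ∈ Finset.range (n + 1), f i := by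
    rw [hfdef]
    rw [Finset.sum_indicator_eq_sum_filter]
    simp [one_div, hF]
  have hlog : Real.log (2 * k + 1) ≤ ∑ p ∈ F, (p : ℝ)⁻¹ := by
    rw [hsum]
    refine hn.trans (Finset.sum_le_sum_of_subset_of_nonneg ?_ (fun i _ _ => hf i))
    exact Finset.range_subset_range.mpr (Nat.le_succ n)
  have hprod : ∏ p ∈ F, (1 - (p : ℝ)⁻¹) ≤ (2 * (k : ℝ) + 1)⁻¹ := by
    have h1 : ∏ p ∈ F, (1 - (p : ℝ)⁻¹) ≤ ∏ p ∈ F, Real.exp (-(p : ℝ)⁻¹) := by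
      refine Finset.prod_le_prod (fun p hp => ?_) (fun p hp => ?_)
      · have hp2 : 2 ≤ p := (Finset.mem_filter.mp hp).2.two_le
        have : (p : ℝ)⁻¹ ≤ 1 := by
          rw [inv_le_one_iff₀]; right; exact_mod_cast Nat.one_le_of_lt hp2
        linarith
      · have := Real.add_one_le_exp (-(p : ℝ)⁻¹)
        linarith
    have h2 : ∏ p ∈ F, Real.exp (-(p : ℝ)⁻¹) = Real.exp (-∑ p ∈ F, (p : ℝ)⁻¹) := by
      rw [← Real.exp_sum, Finset.sum_neg_distrib]
    have h3 : Real.exp (-∑ p ∈ F, (p : ℝ)⁻¹) ≤ Real.exp (-Real.log (2 * k + 1)) :=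
      Real.exp_le_exp.mpr (by linarith)
    have h4 : Real.exp (-Real.log (2 * k + 1)) = (2 * (k : ℝ) + 1)⁻¹ := by
      rw [Real.exp_neg, Real.exp_log (by positivity)]
    linarith [h1, h2 ▸ h1, h3, h4]
  have htot : (a.totient : ℝ) = a * ∏ p ∈ F, (1 - (p : ℝ)⁻¹) := by
    have h := Nat.totient_eq_mul_prod_factors a
    rw [hPF] at h
    have h2 := congrArg (fun q : ℚ => (q : ℝ)) h
    push_cast at h2
    exact h2
  have hPnonneg : (0 : ℝ) ≤ ∏ p ∈ F, (1 - (p : ℝ)⁻¹) := by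
    refine Finset.prod_nonneg (fun p hp => ?_)
    have hp2 : 2 ≤ p := (Finset.mem_filter.mp hp).2.two_le
    have : (p : ℝ)⁻¹ ≤ 1 := by
      rw [inv_le_one_iff₀]; right; exact_mod_cast Nat.one_le_of_lt hp2
    linarith
  have hfinal : (2 * k * a.totient : ℝ) ≤ (a : ℝ) := by
    have hareal : (0 : ℝ) ≤ (a : ℝ) := by positivity
    have hk1 : (0:ℝ) < 2 * (k:ℝ) + 1 := by positivity
    have h5 : (a.totient : ℝ) * (2 * (k:ℝ) + 1) ≤ a := by
      rw [htot]
      calc ((a : ℝ) * ∏ p ∈ F, (1 - (p : ℝ)⁻¹)) * (2 * (k:ℝ) + 1)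
          ≤ (a : ℝ) * (2 * (k : ℝ) + 1)⁻¹ * (2 * (k:ℝ) + 1) := by
            exact mul_le_mul_of_nonneg_right
              (mul_le_mul_of_nonneg_left hprod hareal) hk1.le
        _ = a := by field_simp
    have hφ : (0:ℝ) ≤ (a.totient : ℝ) := Nat.cast_nonneg _
    nlinarith
  exact_mod_cast hfinal

/-- π(n) is eventually smaller than n/k. -/
lemma aux_bound (k : ℕ) : ∃ N : ℕ, ∀ n, N ≤ n → k * n.primeCounting < n := by
  obtain ⟨a, ha, hak⟩ := aux_small_totient k
  set C := (a + 1).primeCounting' with hC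
  refine ⟨2 * k * C + 2 * k * a.totient + a + 1, fun n hn => ?_⟩
  have hna : a + 1 ≤ n := by omega
  have hb := Nat.primeCounting'_add_le ha.ne' (lt_add_one a) (n - a)
  have heq : a + 1 + (n - a) = n + 1 := by omega
  rw [heq] at hb
  have hpc : n.primeCounting = (n + 1).primeCounting' := rfl
  have hdiv : a * ((n - a) / a) ≤ n - a := Nat.mul_div_le _ _
  -- 2 * k * π n ≤ 2kC + 2kφ(a)((n-a)/a) + 2kφ(a) and 2kφ(a)*((n-a)/a) ≤ a*((n-a)/a) ≤ n
  have key : 2 * (k * n.primeCounting) ≤ 2 * k * C + a * ((n - a) / a) + 2 * k * a.totient := by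
    rw [hpc]
    calc 2 * (k * (n + 1).primeCounting')
        = 2 * k * (n + 1).primeCounting' := by ring
      _ ≤ 2 * k * (C + a.totient * ((n - a) / a + 1)) :=
          Nat.mul_le_mul_left (2 * k) hb
      _ = 2 * k * C + (2 * k * a.totient) * ((n - a) / a) + 2 * k * a.totient := by ring
      _ ≤ 2 * k * C + a * ((n - a) / a) + 2 * k * a.totient :=
          by gcongr
  have : a * ((n - a) / a) ≤ n := hdiv.trans (Nat.sub_le n a)
  omega

lemma aux_exists_ge (b : ℕ) : ∃ m : ℕ, b < m ∧ m.primeCounting ∣ m := by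
  set k := b + 2 with hk
  obtain ⟨N₀, hN⟩ := aux_bound k
  set N := max N₀ (k + 1) with hNdef
  set S := (Finset.range N).filter (fun n => n ≤ k * n.primeCounting) with hS
  have hπk : 1 ≤ k.primeCounting := by
    rw [Nat.one_le_iff_ne_zero]
    simp only [ne_eq, Nat.primeCounting_eq_zero_iff]
    omega
  have hkS : k ∈ S := by
    refine Finset.mem_filter.mpr ⟨Finset.mem_range.mpr ?_, ?_⟩
    · have : k + 1 ≤ N := le_max_right _ _
      omega
    · calc k = k * 1 := (mul_one k).symm
        _ ≤ k * k.primeCounting := Nat.mul_le_mul_left k hπk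
  have hne : S.Nonempty := ⟨k, hkS⟩
  set m := S.max' hne with hm
  have hmS := Finset.mem_filter.mp (S.max'_mem hne)
  have hmlt : m < N := Finset.mem_range.mp hmS.1
  have hmle : m ≤ k * m.primeCounting := hmS.2
  have hkm : k ≤ m := S.le_max' k hkS
  have hstep : k * (m + 1).primeCounting ≤ m := by
    by_cases hcase : m + 1 < N
    · by_contra hcon
      push_neg at hcon
      have hmem : m + 1 ∈ S :=
        Finset.mem_filter.mpr ⟨Finset.mem_range.mpr hcase, by omega⟩
      have := S.le_max' (m + 1) hmem
      omega
    · have hN₀ : N₀ ≤ m + 1 := by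
        have : N₀ ≤ N := le_max_left _ _
        omega
      have := hN (m + 1) hN₀
      omega
  have hmono : m.primeCounting ≤ (m + 1).primeCounting :=
    Nat.monotone_primeCounting (Nat.le_succ m)
  have heq : k * m.primeCounting = m := by
    have h1 : k * m.primeCounting ≤ k * (m + 1).primeCounting :=
      Nat.mul_le_mul_left k hmono
    omega
  exact ⟨m, by omega, ⟨k, by rw [mul_comm]; omega⟩⟩

theorem stmt_1 : {n : ℕ | n.primeCounting ∣ n}.Infinite := by
  apply Set.infinite_of_not_bddAbove
  rintro ⟨b, hb⟩
  obtain ⟨m, hbm, hdvd⟩ := aux_exists_ge b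
  exact absurd (hb hdvd) (by omega)
end
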